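/- Let d ≥ 1 be an integer and let β satisfy 0 < β < 1/2. There exists a constant C > 0, depending only on d and β, with the following property: for every finite Borel measure σ on ℝ^d with compact support Γ, every bounded continuous φ : ℝ^d × ℝ → ℝ with |φ| ≤ M everywhere, every x ∈ ℝ^d with δ := dist(x, Γ) > 0, and every t > 0, the single-layer heat potential v(x,t) := ∫_0^t ∫ Φ(x,t;y,s) φ(y,s) dσ(y) ds satisfies |v(x,t)| ≤ C · M · σ(ℝ^d) · t^{1−β} · δ^{−(d−2β)}. -/

import Mathlib

open MeasureTheory

/-- The fundamental solution of the heat equation on `ℝ^d`: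
`Φ(x,t;y,s) = (4π(t−s))^{−d/2} exp(−‖x−y‖²/(4(t−s)))` for `t > s`, and `0` for `t ≤ s`. -/
noncomputable def Phi (d : ℕ) (x : EuclideanSpace ℝ (Fin d)) (t : ℝ)
    (y : EuclideanSpace ℝ (Fin d)) (s : ℝ) : ℝ :=
  if t ≤ s then 0
  else (4 * Real.pi * (t - s)) ^ (-(d : ℝ) / 2) * Real.exp (-‖x - y‖ ^ 2 / (4 * (t - s)))

/-- auxiliary lemmas -/
lemma exp_neg_le_rpow {α z : ℝ} (hα : 0 < α) (hz : 0 < z) :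
    Real.exp (-z) ≤ α ^ α * z ^ (-α) := by
  have h1 : z / α ≤ Real.exp (z / α) := by
    have := Real.add_one_le_exp (z / α); linarith
  have h2 : (z / α) ^ α ≤ Real.exp z := by
    calc (z / α) ^ α ≤ (Real.exp (z / α)) ^ α :=
          Real.rpow_le_rpow (by positivity) h1 hα.le
      _ = Real.exp z := by rw [← Real.exp_mul, div_mul_cancel₀ _ hα.ne']
  have hzα : (0:ℝ) < (z / α) ^ α := Real.rpow_pos_of_pos (by positivity) _
  have h3 : (Real.exp z)⁻¹ ≤ ((z / α) ^ α)⁻¹ := inv_anti₀ hzα h2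
  rw [← Real.exp_neg] at h3
  refine h3.trans_eq ?_
  rw [← Real.rpow_neg (by positivity), Real.div_rpow hz.le hα.le,
    Real.rpow_neg hz.le, Real.rpow_neg hα.le]
  field_simp

lemma Phi_le_bound (d : ℕ) (hd : 1 ≤ d) {β : ℝ} (hβ0 : 0 < β) (hβ : β < 1 / 2)
    (x y : EuclideanSpace ℝ (Fin d)) {t s : ℝ} (hts : s < t)
    {δ : ℝ} (hδ : 0 < δ) (hr : δ ≤ ‖x - y‖) :
    Phi d x t y s ≤
      ((4 * Real.pi) ^ (-(d : ℝ) / 2) * ((d : ℝ) / 2 - β) ^ ((d : ℝ) / 2 - β)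
          * 4 ^ ((d : ℝ) / 2 - β)) *
        (t - s) ^ (-β) * δ ^ (-((d : ℝ) - 2 * β)) := by
  have hd1 : (1 : ℝ) ≤ (d : ℝ) := by exact_mod_cast hd
  set α : ℝ := (d : ℝ) / 2 - β with hαdef
  have hα : 0 < α := by simp only [hαdef]; linarith
  set τ : ℝ := t - s with hτdef
  have hτ : 0 < τ := by simp only [hτdef]; linarith
  set r : ℝ := ‖x - y‖ with hrdef
  have hr0 : 0 < r := lt_of_lt_of_le hδ hr
  rw [Phi, if_neg (not_le.mpr hts)]
  have hz : 0 < r ^ 2 / (4 * τ) := by positivity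
  have hexp : Real.exp (-r ^ 2 / (4 * τ)) ≤ α ^ α * (r ^ 2 / (4 * τ)) ^ (-α) := by
    rw [neg_div]; exact exp_neg_le_rpow hα hz
  have e1 : ((4:ℝ) * Real.pi * τ) ^ (-(d : ℝ) / 2)
      = (4 * Real.pi) ^ (-(d : ℝ) / 2) * τ ^ (-(d : ℝ) / 2) :=
    Real.mul_rpow (by positivity) hτ.le
  have e2 : (r ^ 2 / (4 * τ)) ^ (-α) = (4 * τ) ^ α * r ^ (-(2 * α)) := by
    rw [Real.div_rpow (by positivity) (by positivity), Real.rpow_neg (by positivity : (0:ℝ) ≤ 4 * τ),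
      div_inv_eq_mul, ← Real.rpow_natCast r 2, ← Real.rpow_mul hr0.le]
    ring_nf
  have e3 : τ ^ (-(d : ℝ) / 2) * (4 * τ) ^ α = 4 ^ α * τ ^ (-β) := by
    rw [Real.mul_rpow (by norm_num) hτ.le, ← mul_assoc, mul_comm (τ ^ (-(d:ℝ)/2)) ((4:ℝ) ^ α),
      mul_assoc, ← Real.rpow_add hτ]
    congr 1
    simp only [hαdef]; ring
  have e4 : r ^ (-(2 * α)) ≤ δ ^ (-((d : ℝ) - 2 * β)) := by
    have h2α : -(2 * α) = -((d : ℝ) - 2 * β) := by simp only [hαdef]; ring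
    rw [h2α]
    exact Real.rpow_le_rpow_of_nonpos hδ hr (by linarith)
  calc (4 * Real.pi * τ) ^ (-(d : ℝ) / 2) * Real.exp (-r ^ 2 / (4 * τ))
      ≤ (4 * Real.pi * τ) ^ (-(d : ℝ) / 2) * (α ^ α * ((4 * τ) ^ α * r ^ (-(2 * α)))) := by
        rw [← e2]; exact mul_le_mul_of_nonneg_left hexp (by positivity)
    _ = ((4 * Real.pi) ^ (-(d : ℝ) / 2) * α ^ α * 4 ^ α) * τ ^ (-β) * r ^ (-(2 * α)) := by
        rw [e1]
        calc (4 * Real.pi) ^ (-(d:ℝ)/2) * τ ^ (-(d:ℝ)/2) * (α ^ α * ((4 * τ) ^ α * r ^ (-(2 * α))))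
            = (4 * Real.pi) ^ (-(d:ℝ)/2) * α ^ α * (τ ^ (-(d:ℝ)/2) * (4 * τ) ^ α) * r ^ (-(2*α)) := by ring
          _ = _ := by rw [e3]; ring
    _ ≤ _ := by
        refine mul_le_mul_of_nonneg_left e4 ?_
        positivity

lemma time_integrable {β t : ℝ} (hβ1 : β < 1) (ht : 0 < t) :
    IntegrableOn (fun s => (t - s) ^ (-β)) (Set.Ioc 0 t) := by
  have h : IntervalIntegrable (fun u : ℝ => u ^ (-β)) volume 0 t :=
    intervalIntegral.intervalIntegrable_rpow' (by linarith)
  have h2 := h.comp_sub_left t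
  rw [sub_self, sub_zero] at h2
  exact (intervalIntegrable_iff_integrableOn_Ioc_of_le ht.le).mp h2.symm

lemma time_integral {β t : ℝ} (hβ0 : 0 < β) (hβ1 : β < 1) (ht : 0 < t) :
    ∫ s in Set.Ioc 0 t, (t - s) ^ (-β) = t ^ (1 - β) / (1 - β) := by
  rw [← intervalIntegral.integral_of_le ht.le,
    intervalIntegral.integral_comp_sub_left (fun u : ℝ => u ^ (-β)) t,
    sub_self, sub_zero, integral_rpow (Or.inl (by linarith))]
  rw [Real.zero_rpow (by linarith : -β + 1 ≠ 0)]
  rw [show -β + 1 = 1 - β by ring]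
  ring


/-- The single-layer heat potential `v(x,t) = ∫_0^t ∫ Φ(x,t;y,s) φ(y,s) dσ(y) ds`. -/
noncomputable def singleLayer (d : ℕ) (σ : Measure (EuclideanSpace ℝ (Fin d)))
    (φ : EuclideanSpace ℝ (Fin d) → ℝ → ℝ)
    (x : EuclideanSpace ℝ (Fin d)) (t : ℝ) : ℝ :=
  ∫ s in Set.Ioc 0 t, ∫ y, Phi d x t y s * φ y s ∂σ

/-- Pointwise decay bound for the single-layer potential:
`|v(x,t)| ≤ C M σ(ℝ^d) t^{1−β} δ^{−(d−2β)}` with `δ = dist(x, Γ)`. -/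
theorem singleLayer_pointwise_bound (d : ℕ) (hd : 1 ≤ d) (β : ℝ)
    (hβ0 : 0 < β) (hβ : β < 1 / 2) :
    ∃ C : ℝ, 0 < C ∧
      ∀ (σ : Measure (EuclideanSpace ℝ (Fin d))) (_ : IsFiniteMeasure σ)
        (Γ : Set (EuclideanSpace ℝ (Fin d))), IsCompact Γ → σ Γᶜ = 0 →
        ∀ (φ : EuclideanSpace ℝ (Fin d) → ℝ → ℝ),
          (Continuous fun p : EuclideanSpace ℝ (Fin d) × ℝ => φ p.1 p.2) →
          ∀ M : ℝ, (∀ y s, |φ y s| ≤ M) →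
          ∀ x : EuclideanSpace ℝ (Fin d), 0 < Metric.infDist x Γ →
          ∀ t : ℝ, 0 < t →
            |singleLayer d σ φ x t| ≤
              C * M * (σ Set.univ).toReal * t ^ (1 - β) *
                (Metric.infDist x Γ) ^ (-((d : ℝ) - 2 * β)) := by
  have hd1 : (1 : ℝ) ≤ (d : ℝ) := by exact_mod_cast hd
  set C0 : ℝ := (4 * Real.pi) ^ (-(d : ℝ) / 2) * ((d : ℝ) / 2 - β) ^ ((d : ℝ) / 2 - β)
      * 4 ^ ((d : ℝ) / 2 - β) with hC0def
  have hα : (0:ℝ) < (d : ℝ) / 2 - β := by linarith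
  have hC0 : 0 < C0 := by rw [hC0def]; positivity
  have hβ1 : (0:ℝ) < 1 - β := by linarith
  refine ⟨C0 / (1 - β), by positivity, ?_⟩
  intro σ hσfin Γ hΓc hσΓ φ hφc M hM x hδ t ht
  haveI := hσfin
  set δ : ℝ := Metric.infDist x Γ with hδdef
  have hM0 : 0 ≤ M := le_trans (abs_nonneg _) (hM 0 0)
  set σT : ℝ := (σ Set.univ).toReal with hσTdef
  have hσT0 : 0 ≤ σT := ENNReal.toReal_nonneg
  set e : ℝ := -((d : ℝ) - 2 * β) with hedef
  have hδe : 0 ≤ δ ^ e := Real.rpow_nonneg hδ.le _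
  -- a.e. membership in Γ
  have hΓae : ∀ᵐ y ∂σ, y ∈ Γ := by
    rw [ae_iff]
    simpa [Set.compl_def] using hσΓ
  -- inner bound for each s < t
  have hinner : ∀ s : ℝ, s < t →
      ‖∫ y, Phi d x t y s * φ y s ∂σ‖ ≤ C0 * M * σT * δ ^ e * (t - s) ^ (-β) := by
    intro s hst
    have hb := norm_integral_le_of_norm_le (μ := σ) (f := fun y => Phi d x t y s * φ y s)
      (g := fun _ => C0 * (t - s) ^ (-β) * δ ^ e * M)
      (integrable_const _) ?_
    · refine hb.trans ?_
      rw [integral_const, smul_eq_mul]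
      rw [measureReal_def, ← hσTdef]
      apply le_of_eq; ring
    · filter_upwards [hΓae] with y hy
      have hry : δ ≤ ‖x - y‖ := by
        rw [← dist_eq_norm]
        exact Metric.infDist_le_dist_of_mem hy
      have hPhi0 : 0 ≤ Phi d x t y s := by
        rw [Phi]; split_ifs with h
        · exact le_rfl
        · exact mul_nonneg (Real.rpow_nonneg (mul_nonneg (by positivity)
            (sub_pos.mpr (not_le.mp h)).le) _) (Real.exp_nonneg _)
      have hPhile := Phi_le_bound d hd hβ0 hβ x y hst hδ hry
      rw [norm_mul, Real.norm_eq_abs, Real.norm_eq_abs, abs_of_nonneg hPhi0]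
      calc Phi d x t y s * |φ y s|
          ≤ (C0 * (t - s) ^ (-β) * δ ^ e) * M := by
            exact mul_le_mul hPhile (hM y s) (abs_nonneg _)
              (mul_nonneg (mul_nonneg hC0.le (Real.rpow_nonneg (sub_pos.mpr hst).le _)) hδe)
        _ = C0 * (t - s) ^ (-β) * δ ^ e * M := by ring
  -- outer bound
  have hg : IntegrableOn (fun s => C0 * M * σT * δ ^ e * (t - s) ^ (-β)) (Set.Ioc 0 t) :=
    (time_integrable (by linarith) ht).const_mul _
  have houter : ‖singleLayer d σ φ x t‖ ≤
      ∫ s in Set.Ioc 0 t, C0 * M * σT * δ ^ e * (t - s) ^ (-β) := by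
    refine norm_integral_le_of_norm_le hg ?_
    have hne : ∀ᵐ s : ℝ ∂(volume.restrict (Set.Ioc 0 t)), s ≠ t := by
      refine ae_restrict_of_ae ?_
      rw [ae_iff]
      simpa [not_not, Set.setOf_eq_eq_singleton] using Real.volume_singleton
    filter_upwards [ae_restrict_mem measurableSet_Ioc, hne] with s hs hst
    exact hinner s (lt_of_le_of_ne hs.2 hst)
  have hval : ∫ s in Set.Ioc 0 t, C0 * M * σT * δ ^ e * (t - s) ^ (-β)
      = C0 * M * σT * δ ^ e * (t ^ (1 - β) / (1 - β)) := by
    rw [integral_const_mul, time_integral hβ0 (by linarith) ht]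
  rw [← Real.norm_eq_abs]
  refine houter.trans ?_
  rw [hval]
  apply le_of_eq
  ring
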